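/- Let R be a commutative ring in which 2 is invertible, and let G be the infinite dihedral group, generated by elements α and β subject to the relations α² = 1 and αβα⁻¹ = β⁻¹. Then the center of the group algebra R[G] is a polynomial ring over R generated by T = β + β⁻¹; precisely, the R-algebra homomorphism from the polynomial ring R[X] to R[G] sending X to β + β⁻¹ is injective and its image equals the center of R[G]. -/

import Mathlib

/-- The element `T = β + β⁻¹` of the group algebra `R[G]` of the infinite dihedral group
`G = ⟨α, β | α² = 1, αβα⁻¹ = β⁻¹⟩` (realized as `DihedralGroup 0`, with `β = r 1`). -/
noncomputable def dihedralT (R : Type*) [CommRing R] :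
    MonoidAlgebra R (DihedralGroup 0) :=
  MonoidAlgebra.of R (DihedralGroup 0) (DihedralGroup.r 1) +
    MonoidAlgebra.of R (DihedralGroup 0) (DihedralGroup.r 1)⁻¹

namespace CenterDihedralAux

open MonoidAlgebra DihedralGroup Polynomial

variable (R : Type*) [CommRing R]

theorem T_def : dihedralT R = single (r 1) (1:R) + single (r (-1)) 1 := rfl

@[simp] theorem r_inv (i : ZMod 0) : (r i : DihedralGroup 0)⁻¹ = r (-i) := rfl

/-- `Q n = r n + r (-n)`. -/
noncomputable def Q (n : ℕ) : MonoidAlgebra R (DihedralGroup 0) :=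
  single (r (n : ZMod 0)) 1 + single (r (-(n : ZMod 0))) 1

theorem TQ (n : ℕ) : dihedralT R * Q R (n+1) = Q R (n+2) + Q R n := by
  simp only [T_def, Q, mul_add, add_mul, single_mul_single, one_mul, r_mul_r]
  have e1 : (1:ZMod 0) + ((n+1:ℕ):ZMod 0) = ((n+2:ℕ):ZMod 0) := by push_cast; ring
  have e2 : (1:ZMod 0) + -((n+1:ℕ):ZMod 0) = -((n:ℕ):ZMod 0) := by push_cast; ring
  have e3 : (-1:ZMod 0) + ((n+1:ℕ):ZMod 0) = ((n:ℕ):ZMod 0) := by push_cast; ring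
  have e4 : (-1:ZMod 0) + -((n+1:ℕ):ZMod 0) = -((n+2:ℕ):ZMod 0) := by push_cast; ring
  rw [e1, e2, e3, e4]; abel

/-- The polynomials with `aeval T (q n) = Q n` : rescaled Chebyshev. -/
noncomputable def q : ℕ → Polynomial R
  | 0 => 2
  | 1 => X
  | (n+2) => X * q (n+1) - q n

theorem Q_zero : Q R 0 = 2 := by
  simp only [Q, Nat.cast_zero, neg_zero]
  rw [← DihedralGroup.one_def, ← MonoidAlgebra.one_def, one_add_one_eq_two]

theorem Q_one : Q R 1 = dihedralT R := by
  rw [T_def, Q]; push_cast; rfl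

theorem aeval_q (n : ℕ) : Polynomial.aeval (dihedralT R) (q R n) = Q R n := by
  induction n using Nat.twoStepInduction with
  | zero => rw [q]; simp [Q_zero]; rw [map_ofNat]
  | one => rw [q]; simp [Q_one]
  | more n ih1 ih2 =>
      rw [q, map_sub, map_mul, Polynomial.aeval_X, ih1, ih2]
      rw [show n+1+1 = n+2 from rfl, TQ]
      abel

theorem castinj {a b : ℤ} : ((a : ZMod 0) = (b : ZMod 0)) ↔ a = b :=
  Int.cast_injective.eq_iff

theorem mul_T_apply (f : MonoidAlgebra R (DihedralGroup 0)) (j : ℤ) :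
    (f * dihedralT R).coeff (r (j : ZMod 0)) =
      f.coeff (r ((j-1 : ℤ) : ZMod 0)) + f.coeff (r ((j+1 : ℤ) : ZMod 0)) := by
  rw [T_def, mul_add, MonoidAlgebra.coeff_add, Finsupp.add_apply, MonoidAlgebra.mul_single_apply,
    MonoidAlgebra.mul_single_apply, mul_one, mul_one]
  have h1 : (r (j:ZMod 0) : DihedralGroup 0) * (r 1)⁻¹ = r ((j-1 : ℤ) : ZMod 0) := by
    rw [r_inv]; exact r_mul_r _ _
  have h2 : (r (j:ZMod 0) : DihedralGroup 0) * (r (-1))⁻¹ = r ((j+1 : ℤ) : ZMod 0) := by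
    rw [r_inv]; exact r_mul_r _ _
  rw [h1, h2]

theorem pow_coeff (k : ℕ) :
    (dihedralT R ^ k).coeff (r ((k : ℤ) : ZMod 0)) = 1 ∧
    ∀ j : ℤ, (k : ℤ) < j → (dihedralT R ^ k).coeff (r (j : ZMod 0)) = 0 := by
  induction k with
  | zero =>
    simp only [pow_zero, MonoidAlgebra.one_def, MonoidAlgebra.single_apply,
      DihedralGroup.one_def, r.injEq]
    constructor
    · rw [if_pos]; rfl
    · intro j hj
      rw [if_neg]
      intro h
      rw [show (0:ZMod 0) = ((0:ℤ):ZMod 0) by norm_cast] at h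
      exact absurd (show (0:ℤ) = j from r.inj h) (by omega)
  | succ k ih =>
    constructor
    · rw [pow_succ, show (((k+1:ℕ):ℤ) : ZMod 0) = (((k+1:ℤ)) : ZMod 0) by push_cast; ring,
        mul_T_apply]
      rw [show (k+1-1 : ℤ) = (k:ℤ) by ring, ih.1, ih.2 (k+1+1) (by omega)]
      ring
    · intro j hj
      rw [pow_succ, mul_T_apply, ih.2 (j-1) (by push_cast at hj ⊢; omega),
        ih.2 (j+1) (by push_cast at hj ⊢; omega)]
      ring

theorem aevalT_injective :
    Function.Injective
      (Polynomial.aeval (dihedralT R) :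
        Polynomial R →ₐ[R] MonoidAlgebra R (DihedralGroup 0)) := by
  rw [injective_iff_map_eq_zero]
  intro p hp
  by_contra hne
  have hn : (Polynomial.aeval (dihedralT R) p).coeff (r ((p.natDegree : ℤ) : ZMod 0)) =
      p.leadingCoeff := by
    rw [Polynomial.aeval_eq_sum_range, MonoidAlgebra.coeff_sum, Finsupp.finset_sum_apply]
    rw [Finset.sum_eq_single_of_mem p.natDegree (Finset.self_mem_range_succ _)]
    · rw [MonoidAlgebra.coeff_smul_apply, (pow_coeff R p.natDegree).1, smul_eq_mul, mul_one,
        Polynomial.leadingCoeff]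
    · intro b hb hne'
      have hblt : (b : ℤ) < (p.natDegree : ℤ) := by
        have := Finset.mem_range.mp hb
        omega
      rw [MonoidAlgebra.coeff_smul_apply, (pow_coeff R b).2 _ hblt, smul_zero]
  rw [hp] at hn
  simp only [MonoidAlgebra.coeff_zero, Finsupp.coe_zero, Pi.zero_apply] at hn
  exact hne (Polynomial.leadingCoeff_eq_zero.mp hn.symm)

theorem T_comm (y : MonoidAlgebra R (DihedralGroup 0)) : Commute y (dihedralT R) := by
  unfold Commute SemiconjBy
  induction y using MonoidAlgebra.induction_on with
  | of g =>
    rcases g with i | i <;>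
      simp only [MonoidAlgebra.of_apply, T_def, mul_add, add_mul, single_mul_single,
        one_mul, mul_one, r_mul_r, r_mul_sr, sr_mul_r, sr_mul_sr]
    · rw [show i + 1 = 1 + i from by ring, show i + -1 = -1 + i from by ring]
    · rw [show i - 1 = i + -1 from by ring, show i - -1 = i + 1 from by ring]
      abel
  | add f g hf hg => rw [add_mul, mul_add, hf, hg]
  | smul c f hf => rw [smul_mul_assoc, mul_smul_comm, hf]

theorem range_le_center (x : MonoidAlgebra R (DihedralGroup 0))
    (hx : x ∈ Set.range (Polynomial.aeval (dihedralT R) :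
      Polynomial R →ₐ[R] MonoidAlgebra R (DihedralGroup 0))) :
    x ∈ Subring.center (MonoidAlgebra R (DihedralGroup 0)) := by
  obtain ⟨p, rfl⟩ := hx
  rw [Subring.mem_center_iff]
  intro y
  have : Commute y (Polynomial.aeval (dihedralT R) p) := by
    rw [Polynomial.aeval_eq_sum_range]
    exact Commute.sum_right _ _ _ fun i _ => ((T_comm R y).pow_right i).smul_right _
  exact this

section Center

variable {R}
variable (x : MonoidAlgebra R (DihedralGroup 0))
  (hx : ∀ g : MonoidAlgebra R (DihedralGroup 0), g * x = x * g)

include hx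

theorem x_sr_step (i : ZMod 0) : x.coeff (sr (i + 2)) = x.coeff (sr i) := by
  have h := congrArg (fun f : MonoidAlgebra R (DihedralGroup 0) => f.coeff (sr (i + 1)))
    (hx (MonoidAlgebra.single (r 1) 1))
  rw [MonoidAlgebra.single_mul_apply, MonoidAlgebra.mul_single_apply, one_mul, mul_one,
    r_inv, r_mul_sr, sr_mul_r] at h
  rw [show i + 1 - -1 = i + 1 + 1 from by ring, show i + 1 + -1 = i from by ring] at h
  rw [show i + 2 = i + 1 + 1 from by ring, h]

theorem x_sr_eq_zero (i : ZMod 0) : x.coeff (sr i) = 0 := by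
  by_contra hne
  have key : ∀ k : ℕ, x.coeff (sr (i + 2 * k)) = x.coeff (sr i) := by
    intro k
    induction k with
    | zero => norm_num
    | succ k ih =>
      rw [show i + 2 * ((k:ℕ)+1 : ℕ) = (i + 2 * k) + 2 from by push_cast; ring,
        x_sr_step x hx, ih]
  have hinj : Function.Injective fun k : ℕ => (sr (i + 2 * k) : DihedralGroup 0) := by
    intro a b hab
    simp only [sr.injEq] at hab
    have h1 : (2 : ZMod 0) * a = 2 * b := add_left_cancel hab
    have h2 : ((2 * a : ℕ) : ZMod 0) = ((2 * b : ℕ) : ZMod 0) := by push_cast; exact h1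
    have h3 : 2 * a = 2 * b := Nat.cast_injective h2
    omega
  have hmem : ∀ k : ℕ, (sr (i + 2 * k) : DihedralGroup 0) ∈ (x.coeff.support : Set _) := by
    intro k
    simp only [Finset.coe_mem, Finsupp.mem_support_iff, Finset.mem_coe]
    rw [key k]
    exact hne
  exact (Set.infinite_of_injective_forall_mem hinj hmem) x.coeff.support.finite_toSet

theorem x_r_symm (i : ZMod 0) : x.coeff (r (-i)) = x.coeff (r i) := by
  have h := congrArg (fun f : MonoidAlgebra R (DihedralGroup 0) => f.coeff (sr i))
    (hx (MonoidAlgebra.single (sr 0) 1))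
  rw [MonoidAlgebra.single_mul_apply, MonoidAlgebra.mul_single_apply, one_mul, mul_one,
    show (sr (0:ZMod 0) : DihedralGroup 0)⁻¹ = sr 0 from rfl, sr_mul_sr, sr_mul_sr] at h
  rw [show -i = 0 - i from by ring, ← h, show i - 0 = i from by ring]

end Center

noncomputable def Qs (n : ℕ) : MonoidAlgebra R (DihedralGroup 0) :=
  if n = 0 then 1 else Q R n

noncomputable def qs (n : ℕ) : Polynomial R :=
  if n = 0 then 1 else q R n

theorem aeval_qs (n : ℕ) : Polynomial.aeval (dihedralT R) (qs R n) = Qs R n := by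
  unfold qs Qs
  split
  · exact map_one _
  · exact aeval_q R n

theorem Qs_sr (n : ℕ) (i : ZMod 0) : (Qs R n).coeff (sr i) = 0 := by
  unfold Qs
  split
  · rw [MonoidAlgebra.one_def, MonoidAlgebra.single_apply, if_neg]
    intro h; rw [DihedralGroup.one_def] at h; cases h
  · rw [Q, MonoidAlgebra.coeff_add, Finsupp.add_apply, MonoidAlgebra.single_apply, MonoidAlgebra.single_apply,
      if_neg (by simp), if_neg (by simp)]
    ring

theorem Qs_r_zero (n : ℕ) (j : ℤ) (h1 : (n : ℤ) ≠ j) (h2 : (n : ℤ) ≠ -j) :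
    (Qs R n).coeff (r (j : ZMod 0)) = 0 := by
  unfold Qs
  split
  · rename_i h
    subst h
    rw [MonoidAlgebra.one_def, MonoidAlgebra.single_apply, if_neg]
    rw [DihedralGroup.one_def]
    intro hc
    exact h1 (r.inj hc)
  · rw [Q, MonoidAlgebra.coeff_add, Finsupp.add_apply, MonoidAlgebra.single_apply, MonoidAlgebra.single_apply,
      if_neg, if_neg]
    · ring
    · intro hc
      have : -(n:ℤ) = j := r.inj hc
      omega
    · intro hc
      exact h1 (r.inj hc)

theorem Qs_r_self (m : ℕ) : (Qs R m).coeff (r ((m : ℤ) : ZMod 0)) = 1 := by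
  unfold Qs
  split
  · rename_i h
    subst h
    rw [MonoidAlgebra.one_def, MonoidAlgebra.single_apply, if_pos]
    rw [DihedralGroup.one_def]
    norm_cast
  · rename_i h
    have c1 : (r ((m:ℕ) : ZMod 0) : DihedralGroup 0) = r (((m:ℤ) : ℤ) : ZMod 0) := by
      norm_cast
    have c2 : (r (-((m:ℕ) : ZMod 0)) : DihedralGroup 0) ≠ r (((m:ℤ) : ℤ) : ZMod 0) := by
      simp only [ne_eq, r.injEq]
      intro hc
      have h2 : -(m:ℤ) = (m:ℤ) := r.inj hc
      omega
    rw [Q, MonoidAlgebra.coeff_add, Finsupp.add_apply, MonoidAlgebra.single_apply, MonoidAlgebra.single_apply,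
      if_pos c1, if_neg c2, add_zero]

theorem Qs_r_negself (m : ℕ) : (Qs R m).coeff (r ((-(m:ℤ) : ℤ) : ZMod 0)) = 1 := by
  unfold Qs
  split
  · rename_i h
    subst h
    rw [MonoidAlgebra.one_def, MonoidAlgebra.single_apply, if_pos]
    rw [DihedralGroup.one_def]
    norm_cast
  · rename_i h
    have c1 : (r ((m:ℕ) : ZMod 0) : DihedralGroup 0) ≠ r ((-(m:ℤ) : ℤ) : ZMod 0) := by
      simp only [ne_eq, r.injEq]
      intro hc
      have h2 : (m:ℤ) = -(m:ℤ) := r.inj hc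
      omega
    have c2 : (r (-((m:ℕ) : ZMod 0)) : DihedralGroup 0) = r ((-(m:ℤ) : ℤ) : ZMod 0) :=
      congrArg r rfl
    rw [Q, MonoidAlgebra.coeff_add, Finsupp.add_apply, MonoidAlgebra.single_apply, MonoidAlgebra.single_apply,
      if_neg c1, if_pos c2, zero_add]

theorem intCast_zmod0 (j : ℤ) : (@IntCast.intCast (ZMod 0) _ j) = j := rfl

theorem algebraMap_mul_apply (c : R) (y : MonoidAlgebra R (DihedralGroup 0))
    (g : DihedralGroup 0) :
    (algebraMap R (MonoidAlgebra R (DihedralGroup 0)) c * y).coeff g = c * y.coeff g := by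
  have : algebraMap R (MonoidAlgebra R (DihedralGroup 0)) c = MonoidAlgebra.single 1 c := by
    rw [MonoidAlgebra.coe_algebraMap]; rfl
  rw [this, MonoidAlgebra.single_mul_apply, inv_one, one_mul]

theorem center_le_range (x : MonoidAlgebra R (DihedralGroup 0))
    (hx : x ∈ Subring.center (MonoidAlgebra R (DihedralGroup 0))) :
    x ∈ Set.range (Polynomial.aeval (dihedralT R) :
      Polynomial R →ₐ[R] MonoidAlgebra R (DihedralGroup 0)) := by
  rw [Subring.mem_center_iff] at hx
  set f : DihedralGroup 0 → ℕ := fun g => match g with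
    | DihedralGroup.r i => Int.natAbs i
    | DihedralGroup.sr _ => 0 with hf
  set N : ℕ := x.coeff.support.sup f with hN
  have hbound : ∀ j : ℤ, N < Int.natAbs j → x.coeff (r (j : ZMod 0)) = 0 := by
    intro j hj
    by_contra hne
    have hmem : r (j : ZMod 0) ∈ x.coeff.support := Finsupp.mem_support_iff.mpr hne
    have hle : Int.natAbs j ≤ N := Finset.le_sup (f := f) hmem
    omega
  refine ⟨∑ n ∈ Finset.range (N+1), Polynomial.C (x.coeff (r ((n:ℤ) : ZMod 0))) * qs R n, ?_⟩
  rw [map_sum]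
  simp only [map_mul, Polynomial.aeval_C, aeval_qs]
  apply MonoidAlgebra.ext
  apply Finsupp.ext
  intro g
  rw [MonoidAlgebra.coeff_sum, Finsupp.finset_sum_apply]
  simp only [algebraMap_mul_apply]
  rcases g with i | i
  · -- rotations
    obtain ⟨j, rfl⟩ := ZMod.intCast_surjective (n := 0) i
    simp only [intCast_zmod0]
    obtain ⟨m, hm0⟩ : ∃ m : ℕ, j = (m:ℤ) ∨ j = -(m:ℤ) := ⟨Int.natAbs j, Int.natAbs_eq j⟩
    rcases hm0 with rfl | rfl
    · by_cases hm : m ≤ N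
      · rw [Finset.sum_eq_single_of_mem m (Finset.mem_range.mpr (by omega))]
        · rw [Qs_r_self, mul_one]
        · intro b hb hbne
          rw [Qs_r_zero R b (m:ℤ) (by omega) (by omega), mul_zero]
      · rw [Finset.sum_eq_zero, hbound (m:ℤ) (by omega)]
        intro b hb
        have hb' := Finset.mem_range.mp hb
        rw [Qs_r_zero R b (m:ℤ) (by omega) (by omega), mul_zero]
    · by_cases hm : m ≤ N
      · rw [Finset.sum_eq_single_of_mem m (Finset.mem_range.mpr (by omega))]
        · rw [Qs_r_negself, mul_one]
          have hsym := x_r_symm x hx (((m : ℤ)) : ZMod 0)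
          exact hsym.symm
        · intro b hb hbne
          rw [Qs_r_zero R b (-(m:ℤ)) (by omega) (by omega), mul_zero]
      · rw [Finset.sum_eq_zero, hbound (-(m:ℤ)) (by omega)]
        intro b hb
        have hb' := Finset.mem_range.mp hb
        rw [Qs_r_zero R b (-(m:ℤ)) (by omega) (by omega), mul_zero]
  · -- reflections
    simp only [Qs_sr, mul_zero, Finset.sum_const_zero]
    exact (x_sr_eq_zero x hx i).symm

end CenterDihedralAux

/-- Let `R` be a commutative ring in which `2` is invertible and let `G` be the infinite
dihedral group `⟨α, β | α² = 1, αβα⁻¹ = β⁻¹⟩`. Then the center of the group algebra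
`R[G]` is the polynomial ring over `R` on `T = β + β⁻¹`: the `R`-algebra homomorphism
`R[X] → R[G]` sending `X` to `β + β⁻¹` is injective with range the center of `R[G]`. -/
theorem center_groupAlgebra_infinite_dihedral (R : Type*) [CommRing R]
    (h2 : IsUnit (2 : R)) :
    Function.Injective
      (Polynomial.aeval (dihedralT R) :
        Polynomial R →ₐ[R] MonoidAlgebra R (DihedralGroup 0)) ∧
    Set.range
      (Polynomial.aeval (dihedralT R) :
        Polynomial R →ₐ[R] MonoidAlgebra R (DihedralGroup 0)) =
      (Subring.center (MonoidAlgebra R (DihedralGroup 0)) :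
        Set (MonoidAlgebra R (DihedralGroup 0))) := by
  refine ⟨CenterDihedralAux.aevalT_injective R, ?_⟩
  ext x
  exact ⟨CenterDihedralAux.range_le_center R x, CenterDihedralAux.center_le_range R x⟩
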